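/- Let α > 0 and define P_α(x) = H_α(x + i v_α(x)) (which is real for every x ∈ ℝ). Then P_α(x) = x + α + α∫₀^∞ t e^{-t}/(x − t) dt for x < -c_α, and P_α(x) = 2x + α − α∫₀^∞ t² e^{-t}/((x − t)² + v_α(x)²) dt for x ≥ -c_α. -/

import Mathlib

open MeasureTheory Set Filter

/-- `F(x+iy) = ∫₀^∞ t e^{-t}/((x-t)² + y²) dt`. -/
noncomputable def Fint (x y : ℝ) : ℝ :=
  ∫ t in Set.Ioi (0:ℝ), t * Real.exp (-t) / ((x - t)^2 + y^2)

/-- `H_α(z) = z + α + α ∫₀^∞ t e^{-t}/(z-t) dt`. -/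
noncomputable def Hfun (α : ℝ) (z : ℂ) : ℂ :=
  z + (α : ℂ) + (α : ℂ) * ∫ t in Set.Ioi (0:ℝ), ((t * Real.exp (-t) : ℝ) : ℂ) / (z - (t : ℂ))

lemma integ_pow_exp (n : ℕ) :
    IntegrableOn (fun t : ℝ => t ^ n * Real.exp (-t)) (Set.Ioi 0) := by
  have h := Real.GammaIntegral_convergent (s := (n + 1 : ℝ)) (by positivity)
  refine h.congr_fun (fun t ht => ?_) measurableSet_Ioi
  dsimp only
  rw [add_sub_cancel_right, Real.rpow_natCast, mul_comm]

lemma integ_div (x y m : ℝ) (hm : 0 < m)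
    (hD : ∀ t ∈ Set.Ioi (0:ℝ), m ≤ (x - t)^2 + y^2)
    (f : ℝ → ℝ) (hf : Continuous f) (hfi : IntegrableOn f (Set.Ioi 0)) :
    IntegrableOn (fun t : ℝ => f t / ((x - t)^2 + y^2)) (Set.Ioi 0) := by
  have hmeas : AEStronglyMeasurable (fun t : ℝ => f t / ((x - t)^2 + y^2))
      (volume.restrict (Set.Ioi 0)) := by
    refine ContinuousOn.aestronglyMeasurable ?_ measurableSet_Ioi
    refine ContinuousOn.div hf.continuousOn (by fun_prop) ?_
    intro t ht
    have := hD t ht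
    linarith
  refine Integrable.mono' (hfi.abs.div_const m) hmeas ?_
  rw [ae_restrict_iff' measurableSet_Ioi]
  filter_upwards with t ht
  have h1 := hD t ht
  have h2 : (0:ℝ) < (x - t)^2 + y^2 := lt_of_lt_of_le hm h1
  rw [Real.norm_eq_abs, abs_div, abs_of_pos h2]
  gcongr

lemma cint (x y m : ℝ) (hm : 0 < m)
    (hD : ∀ t ∈ Set.Ioi (0:ℝ), m ≤ (x - t)^2 + y^2) :
    (∫ t in Set.Ioi (0:ℝ), ((t * Real.exp (-t) : ℝ) : ℂ) /
        (((x : ℂ) + (y : ℝ) * Complex.I) - (t : ℂ)))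
      = ((∫ t in Set.Ioi (0:ℝ),
          t * Real.exp (-t) * (x - t) / ((x - t)^2 + y^2) : ℝ) : ℂ)
        - ((y * Fint x y : ℝ) : ℂ) * Complex.I := by
  have hDpos : ∀ t ∈ Set.Ioi (0:ℝ), (0:ℝ) < (x - t)^2 + y^2 :=
    fun t ht => lt_of_lt_of_le hm (hD t ht)
  -- pointwise identity
  have hpt : Set.EqOn
      (fun t : ℝ => ((t * Real.exp (-t) : ℝ) : ℂ) /
        (((x : ℂ) + (y : ℝ) * Complex.I) - (t : ℂ)))
      (fun t : ℝ =>
        ((t * Real.exp (-t) * (x - t) / ((x - t)^2 + y^2) : ℝ) : ℂ)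
        - ((t * Real.exp (-t) * y / ((x - t)^2 + y^2) : ℝ) : ℂ) * Complex.I)
      (Set.Ioi 0) := by
    intro t ht
    have hDne : ((x - t)^2 + y^2 : ℝ) ≠ 0 := (hDpos t ht).ne'
    have hzc : (((x - t : ℝ) : ℂ) + (y : ℝ) * Complex.I) *
        (((x - t : ℝ) : ℂ) - (y : ℝ) * Complex.I) = (((x - t)^2 + y^2 : ℝ) : ℂ) := by
      push_cast
      linear_combination (-(y:ℂ)^2) * Complex.I_sq
    have hzne : (((x : ℂ) + (y : ℝ) * Complex.I) - (t : ℂ)) ≠ 0 := by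
      intro h0
      have h1 : (((x - t : ℝ) : ℂ) + (y : ℝ) * Complex.I) = 0 := by
        push_cast; push_cast at h0; linear_combination h0
      rw [h1, zero_mul] at hzc
      exact (Complex.ofReal_ne_zero.mpr hDne) hzc.symm
    have hz : (((x : ℂ) + (y : ℝ) * Complex.I) - (t : ℂ))
        = (((x - t : ℝ) : ℂ) + (y : ℝ) * Complex.I) := by push_cast; ring
    have hDneC : (((x - t)^2 + y^2 : ℝ) : ℂ) ≠ 0 := Complex.ofReal_ne_zero.mpr hDne
    have hzne' : (((x - t : ℝ) : ℂ) + (y : ℝ) * Complex.I) ≠ 0 := by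
      rw [← hz]; exact hzne
    have h2 : ((t * Real.exp (-t) : ℝ) : ℂ) / (((x - t : ℝ) : ℂ) + (y : ℝ) * Complex.I)
        = ((t * Real.exp (-t) : ℝ) : ℂ) * (((x - t : ℝ) : ℂ) - (y : ℝ) * Complex.I)
          / (((x - t)^2 + y^2 : ℝ) : ℂ) := by
      rw [div_eq_div_iff hzne' hDneC]
      linear_combination (-((t * Real.exp (-t) : ℝ) : ℂ)) * hzc
    dsimp only
    rw [hz, h2]
    push_cast
    ring
  rw [setIntegral_congr_fun measurableSet_Ioi hpt]
  -- integrability of the two real pieces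
  have hA : IntegrableOn (fun t : ℝ => t * Real.exp (-t) * (x - t) / ((x - t)^2 + y^2))
      (Set.Ioi 0) := by
    refine integ_div x y m hm hD _ (by fun_prop) ?_
    have : IntegrableOn (fun t : ℝ => x * (t ^ 1 * Real.exp (-t)) - t ^ 2 * Real.exp (-t))
        (Set.Ioi 0) := ((integ_pow_exp 1).const_mul x).sub (integ_pow_exp 2)
    refine this.congr_fun (fun t ht => ?_) measurableSet_Ioi
    ring
  have hB : IntegrableOn (fun t : ℝ => t * Real.exp (-t) * y / ((x - t)^2 + y^2))
      (Set.Ioi 0) := by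
    refine integ_div x y m hm hD _ (by fun_prop) ?_
    have : IntegrableOn (fun t : ℝ => (t ^ 1 * Real.exp (-t)) * y)
        (Set.Ioi 0) := (integ_pow_exp 1).mul_const y
    refine this.congr_fun (fun t ht => ?_) measurableSet_Ioi
    ring
  refine (integral_sub (hA.ofReal) ((hB.ofReal).mul_const Complex.I)).trans ?_
  rw [integral_mul_const, integral_ofReal, integral_complex_ofReal]
  have hBval : (∫ t in Set.Ioi (0:ℝ), t * Real.exp (-t) * y / ((x - t)^2 + y^2))
      = y * Fint x y := by
    rw [Fint, ← integral_const_mul]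
    exact setIntegral_congr_fun measurableSet_Ioi (fun t ht => by ring)
  rw [hBval]
  rfl

/-- `H_α(x+iy)` is the coercion of a real number, provided `y · F(x+iy) = 1/α · y`
    (which makes the imaginary part vanish). -/
lemma Hfun_real (α x y m : ℝ) (hα : 0 < α) (hm : 0 < m)
    (hD : ∀ t ∈ Set.Ioi (0:ℝ), m ≤ (x - t)^2 + y^2)
    (hF : y * Fint x y = y * (1/α)) :
    Hfun α ((x : ℂ) + (y : ℝ) * Complex.I)
      = ((x + α + α * ∫ t in Set.Ioi (0:ℝ),
          t * Real.exp (-t) * (x - t) / ((x - t)^2 + y^2) : ℝ) : ℂ) := by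
  rw [Hfun, cint x y m hm hD, hF]
  have hαne : (α : ℂ) ≠ 0 := Complex.ofReal_ne_zero.mpr hα.ne'
  push_cast
  field_simp
  ring

theorem free_gamma_P_formulas
    (α : ℝ) (hα : 0 < α) (c : ℝ) (hc : 0 < c)
    (hceq : (∫ t in Set.Ioi (0:ℝ), t * Real.exp (-t) / (c + t)^2) = 1/α)
    (v : ℝ → ℝ) (hv0 : ∀ x ≤ -c, v x = 0)
    (hvpos : ∀ x, -c < x → 0 < v x)
    (hveq : ∀ x, -c < x → Fint x (v x) = 1/α)
    (hvuniq : ∀ x, -c < x → ∀ y, 0 < y → Fint x y = 1/α → y = v x)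
    (P : ℝ → ℝ)
    (hP : ∀ x : ℝ, ((P x : ℝ) : ℂ) = Hfun α ((x : ℂ) + (v x : ℝ) * Complex.I)) :
    (∀ x : ℝ, x < -c →
      P x = x + α + α * ∫ t in Set.Ioi (0:ℝ), t * Real.exp (-t) / (x - t)) ∧
    (∀ x : ℝ, -c ≤ x →
      P x = 2*x + α - α * ∫ t in Set.Ioi (0:ℝ),
        t^2 * Real.exp (-t) / ((x - t)^2 + (v x)^2)) := by
  constructor
  · -- below -c
    intro x hx
    have hvx : v x = 0 := hv0 x hx.le
    have hD : ∀ t ∈ Set.Ioi (0:ℝ), c^2 ≤ (x - t)^2 + (v x)^2 := by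
      intro t ht
      have ht' : 0 < t := ht
      nlinarith [sq_nonneg (v x)]
    have hF : v x * Fint x (v x) = v x * (1/α) := by rw [hvx]; ring
    have h := Hfun_real α x (v x) (c^2) hα (by positivity) hD hF
    have hPx := hP x
    rw [h] at hPx
    have hPx' : P x = x + α + α * ∫ t in Set.Ioi (0:ℝ),
        t * Real.exp (-t) * (x - t) / ((x - t)^2 + (v x)^2) :=
      Complex.ofReal_inj.mp hPx
    rw [hPx']
    congr 1
    congr 1
    refine setIntegral_congr_fun measurableSet_Ioi (fun t ht => ?_)
    have ht' : (0:ℝ) < t := ht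
    have hne : x - t ≠ 0 := by nlinarith
    rw [hvx]
    field_simp
    ring
  · -- above -c
    intro x hx
    -- get m and Fint x (v x) = 1/α
    have key : ∃ m : ℝ, 0 < m ∧ (∀ t ∈ Set.Ioi (0:ℝ), m ≤ (x - t)^2 + (v x)^2) ∧
        Fint x (v x) = 1/α := by
      rcases eq_or_lt_of_le hx with h | h
      · have hvx : v x = 0 := hv0 x h.symm.le
        refine ⟨c^2, by positivity, ?_, ?_⟩
        · intro t ht
          have ht' : (0:ℝ) < t := ht
          have : x = -c := h.symm
          nlinarith [sq_nonneg (v x)]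
        · rw [Fint, ← hceq]
          refine setIntegral_congr_fun measurableSet_Ioi (fun t ht => ?_)
          have : x = -c := h.symm
          rw [hvx, this]
          ring_nf
      · refine ⟨(v x)^2, pow_pos (hvpos x h) 2, ?_, hveq x h⟩
        intro t ht
        nlinarith [sq_nonneg (x - t)]
    obtain ⟨m, hm, hD, hF⟩ := key
    have hF' : v x * Fint x (v x) = v x * (1/α) := by rw [hF]
    have h := Hfun_real α x (v x) m hα hm hD hF'
    have hPx := hP x
    rw [h] at hPx
    have hPx' : P x = x + α + α * ∫ t in Set.Ioi (0:ℝ),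
        t * Real.exp (-t) * (x - t) / ((x - t)^2 + (v x)^2) :=
      Complex.ofReal_inj.mp hPx
    -- split the integral
    have hsplit : (∫ t in Set.Ioi (0:ℝ),
        t * Real.exp (-t) * (x - t) / ((x - t)^2 + (v x)^2))
        = x * Fint x (v x) - ∫ t in Set.Ioi (0:ℝ),
            t^2 * Real.exp (-t) / ((x - t)^2 + (v x)^2) := by
      have h1 : IntegrableOn
          (fun t : ℝ => x * (t * Real.exp (-t) / ((x - t)^2 + (v x)^2))) (Set.Ioi 0) := by
        refine Integrable.const_mul ?_ x
        refine integ_div x (v x) m hm hD _ (by fun_prop) ?_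
        refine (integ_pow_exp 1).congr_fun (fun t ht => ?_) measurableSet_Ioi
        ring
      have h2 : IntegrableOn
          (fun t : ℝ => t^2 * Real.exp (-t) / ((x - t)^2 + (v x)^2)) (Set.Ioi 0) :=
        integ_div x (v x) m hm hD _ (by fun_prop) (integ_pow_exp 2)
      have heq : (∫ t in Set.Ioi (0:ℝ),
          t * Real.exp (-t) * (x - t) / ((x - t)^2 + (v x)^2))
          = ∫ t in Set.Ioi (0:ℝ),
            (x * (t * Real.exp (-t) / ((x - t)^2 + (v x)^2))
              - t^2 * Real.exp (-t) / ((x - t)^2 + (v x)^2)) := by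
        refine setIntegral_congr_fun measurableSet_Ioi (fun t ht => ?_)
        ring
      rw [heq]
      refine (integral_sub h1 h2).trans ?_
      rw [integral_const_mul, Fint]
    rw [hPx', hsplit, hF]
    field_simp
    ring
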